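/- Suppose T_1,...,T_T are i.i.d. Geometric(p) random variables (P(T_b = k) = p(1−p)^{k−1} for k = 1,2,...) with 0 < p and T·p < 1. Then for every t ∈ {2,...,T}: E[P_{<t}] = T(1 − (1−p)^{t−1}), Var(P_{<t}) = T(1 − (1−p)^{t−1})(1−p)^{t−1}, the quantity t − E[P_{<t}] is strictly positive, and P(P_{<t} > t − 1) ≤ T p (1 − (t−1)p) / ((t−1)(1 − T p)²). -/

import Mathlib

open MeasureTheory ProbabilityTheory Finset

private lemma aux_ineq (T n p q : ℝ) (hn : 1 ≤ n) (hT : n + 1 ≤ T)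
    (hp : 0 < p) (hTp : T * p < 1) (hq0 : 0 ≤ q) (hq1 : q ≤ 1) (hqs : q ≤ n * p) :
    n * (q * (1 - q)) * (1 - T * p) ^ 2 ≤ p * (1 - n * p) * (n + 1 - T * q) ^ 2 := by
  set u := 1 - T * p with hu
  set d := n * p - q with hd
  set a := 1 - n * p with ha
  have hupos : 0 < u := by simp [hu]; linarith
  have hd0 : 0 ≤ d := by simp [hd]; linarith
  have hau : u + p ≤ a := by simp [hu, ha]; nlinarith
  have ha0 : 0 ≤ a := by linarith
  have hTn : n ≤ T := by linarith
  have hn0 : (0:ℝ) ≤ n := by linarith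
  have hq1' : 0 ≤ 1 - q := by linarith
  have had : a + d = 1 - q := by rw [ha, hd]; ring
  have key1 : q * (1 - q) ≤ n * p * (a + d) := by
    rw [had]; exact mul_le_mul_of_nonneg_right hqs hq1'
  have hrw : n + 1 - T * q = 1 + n * u + T * d := by simp [hu, hd]; ring
  rw [hrw]
  have hnu0 : 0 ≤ n * u := mul_nonneg hn0 hupos.le
  have hnu : n * u ≤ 1 + n * u := by linarith
  have hpa : 0 ≤ p * a := mul_nonneg hp.le ha0
  have h1 : p * a * (1 + n * u) ^ 2 ≥ p * a * (n * u) ^ 2 := by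
    have : (n*u)^2 ≤ (1 + n*u)^2 := by nlinarith
    nlinarith
  have m1 : u * (n * u) ≤ a * (1 + n * u) :=
    mul_le_mul (by linarith) hnu hnu0 ha0
  have m2 : u * (n * u) * (n * d) ≤ a * (1 + n * u) * (T * d) := by
    apply mul_le_mul m1 (by nlinarith) (mul_nonneg hn0 hd0)
    exact mul_nonneg ha0 (by linarith)
  have h2 : 2 * (p * a) * (1 + n * u) * (T * d) ≥ p * n ^ 2 * u ^ 2 * d := by
    have hm3 := mul_le_mul_of_nonneg_left m2 hp.le
    nlinarith [mul_nonneg hp.le (mul_nonneg (mul_nonneg ha0 (by linarith : (0:ℝ) ≤ 1 + n*u)) (mul_nonneg (by linarith : (0:ℝ) ≤ T) hd0))]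
  have expand : p * a * (1 + n * u + T * d) ^ 2 ≥ p * a * (1 + n*u)^2 + 2*(p*a)*(1+n*u)*(T*d) := by
    nlinarith [mul_nonneg hpa (sq_nonneg (T*d))]
  have key1' : n * u^2 * (q * (1 - q)) ≤ n * u^2 * (n * p * (a + d)) :=
    mul_le_mul_of_nonneg_left key1 (mul_nonneg hn0 (sq_nonneg u))
  linarith [key1', h1, h2, expand]

/-- Suppose `Tb 1, …, Tb T` are i.i.d. `Geometric(p)` perishing times
(`P(Tb b = k) = p (1−p)^{k−1}` for `k ≥ 1`) with `0 < p` and `T·p < 1`, `T ≥ 2`, and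
`P_{<t} = Σ_b 1{Tb b < t}`. Then for every `t ∈ {2,…,T}`:
`E[P_{<t}] = T(1 − (1−p)^{t−1})`, `Var(P_{<t}) = T(1 − (1−p)^{t−1})(1−p)^{t−1}`,
`t − E[P_{<t}] > 0`, and `P(P_{<t} > t − 1) ≤ Tp(1 − (t−1)p)/((t−1)(1 − Tp)²)`. -/
theorem stmt11 {Ω : Type*} [MeasurableSpace Ω] (μ : Measure Ω) [IsProbabilityMeasure μ]
    (T : ℕ) (hT : 2 ≤ T)
    (p : ℝ) (hp : 0 < p) (hTp : (T : ℝ) * p < 1)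
    (Tb : Fin T → Ω → ℕ) (hmeas : ∀ b, Measurable (Tb b))
    (hindep : iIndepFun Tb μ)
    (hgeom : ∀ b : Fin T, ∀ k : ℕ, 1 ≤ k →
      μ {ω | Tb b ω = k} = ENNReal.ofReal (p * (1 - p) ^ (k - 1)))
    (hTb1 : ∀ b, ∀ᵐ ω ∂μ, 1 ≤ Tb b ω) :
    ∀ t ∈ Finset.Icc 2 T,
      (∫ ω, (∑ b : Fin T, if Tb b ω < t then (1 : ℝ) else 0) ∂μ
          = (T : ℝ) * (1 - (1 - p) ^ (t - 1))) ∧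
      (variance (fun ω => ∑ b : Fin T, if Tb b ω < t then (1 : ℝ) else 0) μ
          = (T : ℝ) * (1 - (1 - p) ^ (t - 1)) * (1 - p) ^ (t - 1)) ∧
      (0 < (t : ℝ) - (T : ℝ) * (1 - (1 - p) ^ (t - 1))) ∧
      ((μ {ω | (t : ℕ) - 1 <
            (Finset.univ.filter (fun b : Fin T => Tb b ω < t)).card}).toReal
        ≤ (T : ℝ) * p * (1 - ((t : ℝ) - 1) * p)
            / (((t : ℝ) - 1) * (1 - (T : ℝ) * p) ^ 2)) := by
  intro t ht
  rw [Finset.mem_Icc] at ht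
  obtain ⟨ht2, htT⟩ := ht
  have hT2 : (2:ℝ) ≤ (T:ℝ) := by exact_mod_cast hT
  have ht2R : (2:ℝ) ≤ (t:ℝ) := by exact_mod_cast ht2
  have htTR : (t:ℝ) ≤ (T:ℝ) := by exact_mod_cast htT
  have hp1 : p < 1 := by nlinarith
  have hx0 : (0:ℝ) ≤ 1 - p := by linarith
  set x : ℝ := 1 - p with hxdef
  set q : ℝ := 1 - x ^ (t - 1) with hqdef
  have hxpow0 : 0 ≤ x ^ (t-1) := pow_nonneg hx0 _
  have hxpow1 : x ^ (t-1) ≤ 1 := pow_le_one₀ hx0 (by rw [hxdef]; linarith)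
  have hq0 : 0 ≤ q := by rw [hqdef]; linarith
  have hq1 : q ≤ 1 := by rw [hqdef]; linarith
  have hcast : ((t - 1 : ℕ) : ℝ) = (t:ℝ) - 1 := by
    rw [Nat.cast_sub (by omega), Nat.cast_one]
  -- Bernoulli: q ≤ (t-1) p
  have hber : q ≤ ((t:ℝ) - 1) * p := by
    have h := one_add_mul_le_pow (a := -p) (by linarith) (t - 1)
    have hx : (1 + -p) = x := by rw [hxdef]; ring
    rw [hx] at h
    rw [hqdef]
    rw [hcast] at h
    linarith
  -- measurability of the events
  have hAmeas : ∀ b, MeasurableSet {ω | Tb b ω < t} := fun b =>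
    (hmeas b) (by trivial : MeasurableSet {k : ℕ | k < t})
  -- measure of the event
  have hA : ∀ b, μ {ω | Tb b ω < t} = ENNReal.ofReal q := by
    intro b
    have hset : {ω | Tb b ω < t} = ⋃ k ∈ Finset.range t, {ω | Tb b ω = k} := by
      ext ω; simp [Finset.mem_range]
    have hdisj : (↑(Finset.range t) : Set ℕ).PairwiseDisjoint
        (fun k => {ω | Tb b ω = k}) := by
      intro i _ j _ hij
      simp only [Function.onFun, Set.disjoint_left]
      intro ω h1 h2
      exact hij (h1.symm.trans h2)
    rw [hset, measure_biUnion_finset hdisj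
      (fun k _ => (hmeas b) (measurableSet_singleton k))]
    have hr : Finset.range t = insert 0 (Finset.Icc 1 (t-1)) := by
      ext k; simp [Finset.mem_range, Finset.mem_Icc]; omega
    rw [hr, Finset.sum_insert (by simp)]
    have h0 : μ {ω | Tb b ω = 0} = 0 := by
      refine measure_mono_null ?_ (ae_iff.mp (hTb1 b))
      intro ω hω
      simp only [Set.mem_setOf_eq] at hω ⊢
      omega
    rw [h0, zero_add]
    rw [Finset.sum_congr rfl (fun k hk => hgeom b k (Finset.mem_Icc.mp hk).1)]
    rw [← ENNReal.ofReal_sum_of_nonneg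
      (fun k _ => mul_nonneg hp.le (pow_nonneg hx0 _))]
    congr 1
    have hIco : Finset.Icc 1 (t-1) = Finset.Ico 1 t := by
      ext k; simp [Finset.mem_Icc, Finset.mem_Ico]; omega
    rw [hIco, Finset.sum_Ico_eq_sum_range]
    have : ∀ j, p * x ^ (1 + j - 1) = p * x ^ j := by
      intro j; rw [Nat.add_sub_cancel_left]
    rw [Finset.sum_congr rfl (fun j _ => this j), ← Finset.mul_sum]
    have hxne : x ≠ 1 := by rw [hxdef]; intro h; linarith [h]
    rw [geom_sum_eq hxne, hqdef, hxdef]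
    have hpne : p ≠ 0 := ne_of_gt hp
    field_simp
    rw [div_eq_iff (by intro h; apply hpne; linarith)]
    ring
  -- the indicator variables
  set f : ℕ → ℝ := fun k => if k < t then 1 else 0 with hfdef
  have hfmeas : Measurable f := measurable_from_top
  set X : Fin T → Ω → ℝ := fun b => f ∘ Tb b with hXdef
  have hXb : ∀ b ω, X b ω = if Tb b ω < t then (1:ℝ) else 0 := fun b ω => rfl
  have hfun : (fun ω => ∑ b : Fin T, if Tb b ω < t then (1 : ℝ) else 0)
      = ∑ b, X b := by
    funext ω
    rw [Finset.sum_apply]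
    exact Finset.sum_congr rfl (fun b _ => (hXb b ω).symm)
  have hind : ∀ b, X b = Set.indicator {ω | Tb b ω < t} (fun _ => (1:ℝ)) := by
    intro b; funext ω
    by_cases h : Tb b ω < t <;>
      simp [hXb, Set.indicator_apply, Set.mem_setOf_eq, h]
  have hInt : ∀ b, Integrable (X b) μ := by
    intro b; rw [hind b]
    exact (integrable_const 1).indicator (hAmeas b)
  have hEX : ∀ b, μ[X b] = q := by
    intro b
    rw [hind b, integral_indicator_const (1:ℝ) (hAmeas b), measureReal_def, hA b, smul_eq_mul,
      mul_one, ENNReal.toReal_ofReal hq0]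
  have hmem : ∀ b, MemLp (X b) 2 μ := by
    intro b
    refine MemLp.of_bound ((hfmeas.comp (hmeas b)).aestronglyMeasurable) 1 ?_
    filter_upwards with ω
    rw [hXb]
    split_ifs <;> simp
  have hsum_apply : (∑ b, X b) = fun ω => ∑ b, X b ω := by
    funext ω; rw [Finset.sum_apply]
  have hES : μ[∑ b, X b] = (T:ℝ) * q := by
    rw [hsum_apply, integral_finset_sum _ (fun b _ => hInt b)]
    simp [hEX, Finset.card_univ, mul_comm]
  have hvar : ∀ b, variance (X b) μ = q * (1 - q) := by
    intro b
    rw [variance_eq_sub (hmem b)]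
    have hsq : X b ^ 2 = X b := by
      funext ω
      simp only [Pi.pow_apply, hXb]
      split_ifs <;> norm_num
    rw [hsq, hEX b]
    ring
  have hXindep : iIndepFun X μ :=
    hindep.comp (fun _ => f) (fun _ => hfmeas)
  have hVS : variance (∑ b, X b) μ = (T:ℝ) * (q * (1-q)) := by
    rw [IndepFun.variance_sum (fun b _ => hmem b)
      (fun i _ j _ hij => hXindep.indepFun hij)]
    simp [hvar, Finset.card_univ, mul_comm]
  have h1q : 1 - q = x ^ (t-1) := by rw [hqdef]; ring
  -- part 3
  have hpos : 0 < (t:ℝ) - (T:ℝ) * q := by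
    have hmul := mul_le_mul_of_nonneg_left hber (by linarith : (0:ℝ) ≤ (T:ℝ))
    nlinarith
  refine ⟨?_, ?_, hpos, ?_⟩
  · rw [hfun]; exact hES
  · rw [hfun, hVS, h1q]; ring
  · -- Chebyshev
    have hmemS : MemLp (∑ b, X b) 2 μ := memLp_finset_sum' _ (fun b _ => hmem b)
    have hmono : μ {ω | t - 1 <
          (Finset.univ.filter (fun b : Fin T => Tb b ω < t)).card}
        ≤ ENNReal.ofReal (variance (∑ b, X b) μ / ((t:ℝ) - (T:ℝ)*q)^2) := by
      refine le_trans (measure_mono ?_) (meas_ge_le_variance_div_sq hmemS hpos)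
      intro ω hω
      simp only [Set.mem_setOf_eq] at hω ⊢
      have hcard : t ≤ (Finset.univ.filter (fun b : Fin T => Tb b ω < t)).card := by
        omega
      have hSω : (t:ℝ) ≤ (∑ b, X b) ω := by
        have hEq : (∑ b, X b) ω
            = ((Finset.univ.filter (fun b : Fin T => Tb b ω < t)).card : ℝ) := by
          rw [Finset.sum_apply]
          simp [hXb, Finset.sum_boole]
        rw [hEq]
        exact_mod_cast hcard
      rw [hES]
      rw [abs_of_nonneg (by linarith)]
      linarith
    have htoReal : (μ {ω | t - 1 <
          (Finset.univ.filter (fun b : Fin T => Tb b ω < t)).card}).toReal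
        ≤ variance (∑ b, X b) μ / ((t:ℝ) - (T:ℝ)*q)^2 := by
      have h := ENNReal.toReal_mono ENNReal.ofReal_ne_top hmono
      rwa [ENNReal.toReal_ofReal
        (div_nonneg (variance_nonneg _ _) (sq_nonneg _))] at h
    refine htoReal.trans ?_
    rw [hVS]
    have haux := aux_ineq (T:ℝ) ((t:ℝ)-1) p q (by linarith) (by linarith)
      hp hTp hq0 hq1 hber
    have hd1 : (0:ℝ) < ((t:ℝ) - (T:ℝ)*q)^2 := pow_pos hpos 2
    have hd2 : (0:ℝ) < ((t:ℝ)-1) * (1 - (T:ℝ)*p)^2 :=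
      mul_pos (by linarith) (pow_pos (by linarith) 2)
    rw [div_le_div_iff₀ hd1 hd2]
    have hmul := mul_le_mul_of_nonneg_left haux (by linarith : (0:ℝ) ≤ (T:ℝ))
    nlinarith [hmul]
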